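/- Let u★(γ₁) denote the minimizer of (1/2)‖b − u‖₂² + γ₁‖u‖₁ + γ₂ FL(u). Then for every i, u★(γ₁)[i] = sign(u★(0)[i])·max(|u★(0)[i]| − γ₁, 0); that is, the solution with ℓ¹ penalty is obtained by soft-thresholding the solution without ℓ¹ penalty. -/

import Mathlib

open Finset

/-- The fused lasso (total variation) penalty `FL(u) = ∑_{i=2}^m |u[i] − u[i−1]|`. -/
noncomputable def fusedLassoPenalty {m : ℕ} (u : Fin m → ℝ) : ℝ :=
  ∑ i : Fin m, if h : (i : ℕ) + 1 < m then |u ⟨(i : ℕ) + 1, h⟩ - u i| else 0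

namespace FLSoftAux

/-! ### Soft thresholding -/

noncomputable def soft (γ x : ℝ) : ℝ := max (x - γ) 0 + min (x + γ) 0

lemma soft_mono (γ : ℝ) : Monotone (soft γ) := by
  intro a b h
  unfold soft
  exact add_le_add (max_le_max (by linarith) le_rfl) (min_le_min (by linarith) le_rfl)

lemma soft_of_ge {γ x : ℝ} (hγ : 0 ≤ γ) (h : γ ≤ x) : soft γ x = x - γ := by
  unfold soft
  rw [max_eq_left (by linarith), min_eq_right (by linarith), add_zero]

lemma soft_of_le {γ x : ℝ} (hγ : 0 ≤ γ) (h : x ≤ -γ) : soft γ x = x + γ := by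
  unfold soft
  rw [max_eq_right (by linarith), min_eq_left (by linarith), zero_add]

lemma soft_of_abs_le {γ x : ℝ} (h : |x| ≤ γ) : soft γ x = 0 := by
  rw [abs_le] at h
  unfold soft
  rw [max_eq_right (by linarith), min_eq_right (by linarith), add_zero]

lemma soft_zero_right {γ : ℝ} (hγ : 0 ≤ γ) : soft γ 0 = 0 :=
  soft_of_abs_le (by simpa using hγ)

lemma soft_eq_sign {γ x : ℝ} (hγ : 0 ≤ γ) :
    soft γ x = Real.sign x * max (|x| - γ) 0 := by
  rcases lt_trichotomy x 0 with hx | hx | hx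
  · rw [Real.sign_of_neg hx, abs_of_neg hx]
    rcases le_or_gt (-x) γ with h | h
    · rw [soft_of_abs_le (by rw [abs_of_neg hx]; exact h), max_eq_right (by linarith)]
      ring
    · rw [soft_of_le hγ (by linarith), max_eq_left (by linarith)]
      ring
  · subst hx; simp [soft_zero_right hγ]
  · rw [Real.sign_of_pos hx, abs_of_pos hx]
    rcases le_or_gt x γ with h | h
    · rw [soft_of_abs_le (by rw [abs_of_pos hx]; exact h), max_eq_right (by linarith)]
      ring
    · rw [soft_of_ge hγ h.le, max_eq_left (by linarith)]
      ring

/-- subgradient of `γ‖·‖₁` used at the soft-thresholded point -/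
noncomputable def sg (γ x : ℝ) : ℝ := if γ = 0 then Real.sign x else (x - soft γ x) / γ

lemma soft_zero_left (x : ℝ) : soft 0 x = x := by
  unfold soft
  rcases le_or_gt x 0 with h | h
  · rw [sub_zero, add_zero, max_eq_right h, min_eq_left h, zero_add]
  · rw [sub_zero, add_zero, max_eq_left h.le, min_eq_right h.le, add_zero]

lemma sg_mul {γ : ℝ} (_hγ : 0 ≤ γ) (x : ℝ) : γ * sg γ x = x - soft γ x := by
  unfold sg
  split_ifs with h
  · subst h
    rw [soft_zero_left]; ring
  · field_simp

lemma sign_mul_self_eq_abs (x : ℝ) : Real.sign x * x = |x| := by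
  rcases lt_trichotomy x 0 with hx | hx | hx
  · rw [Real.sign_of_neg hx, abs_of_neg hx]; ring
  · simp [hx]
  · rw [Real.sign_of_pos hx, abs_of_pos hx]; ring

lemma abs_sign_le_one (x : ℝ) : |Real.sign x| ≤ 1 := by
  rcases lt_trichotomy x 0 with hx | hx | hx
  · simp [Real.sign_of_neg hx]
  · simp [hx]
  · simp [Real.sign_of_pos hx]

lemma sg_abs_le {γ : ℝ} (hγ : 0 ≤ γ) (x : ℝ) : |sg γ x| ≤ 1 := by
  unfold sg
  split_ifs with h
  · exact abs_sign_le_one x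
  · have hγ' : 0 < γ := lt_of_le_of_ne hγ (Ne.symm h)
    rw [abs_div, abs_of_pos hγ', div_le_one hγ']
    rcases le_or_gt x (-γ) with hx | hx
    · rw [soft_of_le hγ hx]; rw [abs_le]; constructor <;> linarith
    rcases le_or_gt γ x with hx2 | hx2
    · rw [soft_of_ge hγ hx2]; rw [abs_le]; constructor <;> linarith
    · rw [soft_of_abs_le (abs_le.2 ⟨hx.le, hx2.le⟩)]
      rw [abs_le]; constructor <;> linarith

lemma sg_mul_soft {γ : ℝ} (hγ : 0 ≤ γ) (x : ℝ) : sg γ x * soft γ x = |soft γ x| := by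
  unfold sg
  split_ifs with h
  · subst h
    rw [soft_zero_left]; exact sign_mul_self_eq_abs x
  · have hγ' : 0 < γ := lt_of_le_of_ne hγ (Ne.symm h)
    rcases le_or_gt x (-γ) with hx | hx
    · rw [soft_of_le hγ hx, abs_of_nonpos (by linarith)]
      field_simp
      ring
    rcases le_or_gt γ x with hx2 | hx2
    · rw [soft_of_ge hγ hx2, abs_of_nonneg (by linarith)]
      field_simp
      ring
    · rw [soft_of_abs_le (abs_le.2 ⟨hx.le, hx2.le⟩)]; simp

/-! ### Extracting certificates from quadratic inequalities -/

lemma qbound_le {A C d : ℝ} (hC : 0 ≤ C) (hd : 0 < d)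
    (H : ∀ ε : ℝ, 0 < ε → ε < d → 0 ≤ ε * A + C * ε ^ 2) : 0 ≤ A := by
  by_contra h
  push_neg at h
  set δ := min (d / 2) (-A / (2 * C + 1)) with hδdef
  have hδ1 : 0 < δ := lt_min (by linarith) (div_pos (by linarith) (by linarith))
  have hδ2 : δ < d := lt_of_le_of_lt (min_le_left _ _) (by linarith)
  have hδ3 : δ ≤ -A / (2 * C + 1) := min_le_right _ _
  have h3 : δ * (2 * C + 1) ≤ -A := by
    rw [← le_div_iff₀ (by linarith)]
    exact hδ3
  have := H δ hδ1 hδ2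
  nlinarith [mul_pos hδ1 hδ1, sq_nonneg δ]

lemma cert_abs {A C γ Δ : ℝ} (hC : 0 ≤ C) (hγ : 0 ≤ γ)
    (H : ∀ ε : ℝ, 0 ≤ ε * A + C * ε ^ 2 + γ * (|Δ - ε| - |Δ|)) :
    |A| ≤ γ ∧ A * Δ = γ * |Δ| := by
  have hAle : A ≤ γ := by
    have h1 : 0 ≤ γ - A := by
      apply qbound_le hC one_pos
      intro ε hε _
      have htri : |Δ - -ε| - |Δ| ≤ ε := by
        have h2 : |Δ + ε| ≤ |Δ| + |ε| := abs_add_le Δ ε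
        rw [abs_of_pos hε] at h2
        rw [sub_neg_eq_add]
        linarith
      nlinarith [H (-ε)]
    linarith
  have hAge : -γ ≤ A := by
    have h1 : 0 ≤ γ + A := by
      apply qbound_le hC one_pos
      intro ε hε _
      have htri : |Δ - ε| - |Δ| ≤ ε := by
        have h2 : |Δ - ε| ≤ |Δ| + |ε| := abs_sub Δ ε
        rw [abs_of_pos hε] at h2
        linarith
      nlinarith [H ε]
    linarith
  refine ⟨abs_le.2 ⟨hAge, hAle⟩, ?_⟩
  rcases lt_trichotomy Δ 0 with hΔ | hΔ | hΔ
  · have : 0 ≤ -A - γ := by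
      apply qbound_le hC (neg_pos.2 hΔ)
      intro ε hε hεd
      have habs : |Δ - -ε| = -(Δ + ε) := by
        rw [sub_neg_eq_add]; exact abs_of_nonpos (by linarith)
      have := H (-ε)
      rw [habs, abs_of_neg hΔ] at this
      nlinarith
    have hA : A = -γ := by linarith
    rw [hA, abs_of_neg hΔ]; ring
  · simp [hΔ]
  · have : 0 ≤ A - γ := by
      apply qbound_le hC hΔ
      intro ε hε hεd
      have habs : |Δ - ε| = Δ - ε := abs_of_nonneg (by linarith)
      have := H ε
      rw [habs, abs_of_pos hΔ] at this
      nlinarith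
    have hA : A = γ := by linarith
    rw [hA, abs_of_pos hΔ]

/-! ### Abel summation -/

lemma abel_sum (m : ℕ) (x T : ℕ → ℝ) (h0 : T 0 = 0) (hm : T m = 0) :
    ∑ i ∈ range m, x i * (T i - T (i + 1)) =
    ∑ i ∈ range m, T (i + 1) * (x (i + 1) - x i) := by
  have key : ∑ i ∈ range m, ((fun i => x i * T i) i - (fun i => x i * T i) (i + 1)) =
      (fun i => x i * T i) 0 - (fun i => x i * T i) m := Finset.sum_range_sub' _ m
  simp only at key
  have expand : ∀ i ∈ range m, x i * (T i - T (i + 1)) =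
      (x i * T i - x (i + 1) * T (i + 1)) + T (i + 1) * (x (i + 1) - x i) := by
    intro i _; ring
  rw [Finset.sum_congr rfl expand, Finset.sum_add_distrib, key, h0, hm]
  ring

/-! ### Extension of a `Fin m` vector to `ℕ` -/

noncomputable def extv {m : ℕ} (u : Fin m → ℝ) : ℕ → ℝ :=
  fun n => if h : n < m then u ⟨n, h⟩ else 0

lemma extv_apply {m : ℕ} (u : Fin m → ℝ) (i : Fin m) : extv u (i : ℕ) = u i := by
  unfold extv; rw [dif_pos i.isLt]

lemma fl_ext {m : ℕ} (u : Fin m → ℝ) :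
    fusedLassoPenalty u
      = ∑ n ∈ range m, (if n + 1 < m then |extv u (n + 1) - extv u n| else 0) := by
  unfold fusedLassoPenalty
  refine Eq.trans ?_
    (Fin.sum_univ_eq_sum_range (fun n => if n + 1 < m then |extv u (n + 1) - extv u n| else 0) m)
  refine Finset.sum_congr rfl fun i _ => ?_
  by_cases h : (i : ℕ) + 1 < m
  · show _ = if (i : ℕ) + 1 < m then |extv u ((i : ℕ) + 1) - extv u (i : ℕ)| else 0
    rw [dif_pos h, if_pos h, extv_apply]
    congr 1
    unfold extv
    rw [dif_pos h]
  · show _ = if (i : ℕ) + 1 < m then |extv u ((i : ℕ) + 1) - extv u (i : ℕ)| else 0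
    rw [dif_neg h, if_neg h]

/-! ### The key perturbation inequality -/

lemma key_perturb (m : ℕ) (b u₀ : Fin m → ℝ) (γ₂ : ℝ)
    (hu₀ : ∀ v : Fin m → ℝ,
        (1/2) * (∑ i, (b i - u₀ i)^2) + γ₂ * fusedLassoPenalty u₀ ≤
        (1/2) * (∑ i, (b i - v i)^2) + γ₂ * fusedLassoPenalty v)
    (k : ℕ) (hk : k < m) (ε : ℝ) :
    0 ≤ ε * (∑ j ∈ range (k+1), (extv u₀ j - extv b j)) + (((k:ℝ)+1)/2) * ε^2
      + γ₂ * (if k+1 < m then |(extv u₀ (k+1) - extv u₀ k) - ε| - |extv u₀ (k+1) - extv u₀ k| else 0) := by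
  set v : Fin m → ℝ := fun j => u₀ j + if (j:ℕ) ≤ k then ε else 0 with hv
  have hrng : range (k+1) ⊆ range m := by
    intro n hn; rw [mem_range] at *; omega
  have e1 : ∑ i : Fin m, (b i - v i)^2 =
      ∑ i : Fin m, ((b i - u₀ i)^2 + (if (i:ℕ) ≤ k then 2*ε*(u₀ i - b i) else 0)
        + (if (i:ℕ) ≤ k then ε^2 else 0)) := by
    refine Finset.sum_congr rfl fun i _ => ?_
    by_cases h : (i:ℕ) ≤ k <;> simp only [hv, h, if_true, if_false, if_pos, if_neg, not_false_iff] <;> ring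
  have e2 : ∑ i : Fin m, (if (i:ℕ) ≤ k then 2*ε*(u₀ i - b i) else 0)
      = 2*ε*(∑ j ∈ range (k+1), (extv u₀ j - extv b j)) := by
    rw [Finset.mul_sum]
    have : ∀ i : Fin m, (if (i:ℕ) ≤ k then 2*ε*(u₀ i - b i) else 0)
        = (fun n => if n ≤ k then 2*ε*(extv u₀ n - extv b n) else 0) (i : ℕ) := by
      intro i; simp only [extv_apply]
    rw [Finset.sum_congr rfl fun i _ => this i]
    refine Eq.trans (Fin.sum_univ_eq_sum_range (fun n => if n ≤ k then 2*ε*(extv u₀ n - extv b n) else 0) m) ?_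
    rw [← Finset.sum_subset hrng (by intro n _ hn; rw [mem_range] at hn; rw [if_neg (by omega)])]
    refine Finset.sum_congr rfl fun n hn => ?_
    rw [mem_range] at hn
    rw [if_pos (by omega)]
  have e3 : ∑ i : Fin m, (if (i:ℕ) ≤ k then (ε^2 : ℝ) else 0) = ((k:ℝ)+1) * ε^2 := by
    have : ∀ i : Fin m, (if (i:ℕ) ≤ k then (ε^2:ℝ) else 0)
        = (fun n => if n ≤ k then (ε^2:ℝ) else 0) (i : ℕ) := fun i => rfl
    rw [Finset.sum_congr rfl fun i _ => this i]
    refine Eq.trans (Fin.sum_univ_eq_sum_range (fun n => if n ≤ k then (ε^2:ℝ) else 0) m) ?_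
    rw [← Finset.sum_subset hrng (by intro n _ hn; rw [mem_range] at hn; rw [if_neg (by omega)])]
    have hall : ∀ n ∈ range (k+1), (if n ≤ k then (ε^2:ℝ) else 0) = ε^2 :=
      fun n hn => if_pos (by rw [mem_range] at hn; omega)
    rw [Finset.sum_congr rfl hall, Finset.sum_const, Finset.card_range, nsmul_eq_mul]
    push_cast; ring
  have e4 : fusedLassoPenalty v = fusedLassoPenalty u₀
      + (if k+1 < m then |(extv u₀ (k+1) - extv u₀ k) - ε| - |extv u₀ (k+1) - extv u₀ k| else 0) := by
    unfold fusedLassoPenalty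
    by_cases hkm : k + 1 < m
    · rw [if_pos hkm]
      have step : ∀ i : Fin m,
          (if h : (i:ℕ) + 1 < m then |v ⟨(i:ℕ)+1, h⟩ - v i| else 0)
          = (if h : (i:ℕ) + 1 < m then |u₀ ⟨(i:ℕ)+1, h⟩ - u₀ i| else 0)
            + (if i = (⟨k, hk⟩ : Fin m) then
                |(extv u₀ (k+1) - extv u₀ k) - ε| - |extv u₀ (k+1) - extv u₀ k| else 0) := by
        intro i
        by_cases h : (i:ℕ) + 1 < m
        · rw [dif_pos h, dif_pos h]
          by_cases hik : i = (⟨k, hk⟩ : Fin m)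
          · subst hik
            rw [if_pos rfl]
            have h1 : v ⟨k+1, h⟩ = u₀ ⟨k+1, h⟩ := by
              simp only [hv]; rw [if_neg (by omega)]; ring
            have h2 : v ⟨k, hk⟩ = u₀ ⟨k, hk⟩ + ε := by
              simp only [hv]; rw [if_pos (by omega)]
            have h3 : extv u₀ (k+1) = u₀ ⟨k+1, h⟩ := by unfold extv; rw [dif_pos]
            have h4 : extv u₀ k = u₀ ⟨k, hk⟩ := by unfold extv; rw [dif_pos]
            rw [h1, h2, h3, h4]
            ring_nf
          · rw [if_neg hik, add_zero]
            have hik' : (i:ℕ) ≠ k := fun hc => hik (Fin.ext hc)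
            have h1 : v ⟨(i:ℕ)+1, h⟩ - v i = u₀ ⟨(i:ℕ)+1, h⟩ - u₀ i := by
              simp only [hv]
              rcases lt_or_gt_of_ne hik' with hlt | hgt
              · rw [if_pos (by omega), if_pos (by omega)]; ring
              · rw [if_neg (by omega), if_neg (by omega)]; ring
            rw [h1]
        · rw [dif_neg h, dif_neg h]
          rw [if_neg, add_zero]
          intro hc; subst hc; exact h (by simpa using hkm)
      rw [Finset.sum_congr rfl fun i _ => step i, Finset.sum_add_distrib]
      congr 1
      rw [Finset.sum_ite_eq' univ (⟨k, hk⟩ : Fin m)]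
      rw [if_pos (mem_univ _)]
    · rw [if_neg hkm, add_zero]
      refine Finset.sum_congr rfl fun i _ => ?_
      by_cases h : (i:ℕ) + 1 < m
      · rw [dif_pos h, dif_pos h]
        have h1 : v ⟨(i:ℕ)+1, h⟩ - v i = u₀ ⟨(i:ℕ)+1, h⟩ - u₀ i := by
          simp only [hv]
          rw [if_pos (by omega), if_pos (by omega)]; ring
        rw [h1]
      · rw [dif_neg h, dif_neg h]
  have h := hu₀ v
  rw [e1, Finset.sum_add_distrib, Finset.sum_add_distrib, e2, e3, e4] at h
  nlinarith [h]

/-! ### Transfer of the edge certificate through soft thresholding -/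

lemma transfer {γ₁ γ₂ t a a' : ℝ} (hγ₁ : 0 ≤ γ₁)
    (hcert : t * (a' - a) = γ₂ * |a' - a|) :
    t * (soft γ₁ a' - soft γ₁ a) = γ₂ * |soft γ₁ a' - soft γ₁ a| := by
  rcases lt_trichotomy (soft γ₁ a' - soft γ₁ a) 0 with hd | hd | hd
  · have haa : a' < a := by
      by_contra hc; push_neg at hc
      exact absurd (sub_nonneg.2 (soft_mono γ₁ hc)) (not_le.2 hd)
    have hne : a' - a ≠ 0 := sub_ne_zero.2 (ne_of_lt haa)
    have h1 : |a' - a| = -(a' - a) := abs_of_neg (by linarith)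
    rw [h1] at hcert
    have ht : t = -γ₂ :=
      mul_right_cancel₀ hne (by linarith [hcert] : t * (a' - a) = (-γ₂) * (a' - a))
    rw [ht, abs_of_neg hd]; ring
  · rw [hd]; simp
  · have haa : a < a' := by
      by_contra hc; push_neg at hc
      exact absurd (sub_nonneg.2 (soft_mono γ₁ hc)) (not_le.2 (by linarith))
    have hne : a' - a ≠ 0 := sub_ne_zero.2 (ne_of_gt haa)
    have h1 : |a' - a| = a' - a := abs_of_pos (by linarith)
    rw [h1] at hcert
    have ht : t = γ₂ := mul_right_cancel₀ hne hcert
    rw [ht, abs_of_pos hd]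

/-! ### Abel summation, version with the sign used in the main proof -/

lemma abel_sum2 (m : ℕ) (x T : ℕ → ℝ) (h0 : T 0 = 0) (hm : T m = 0) :
    ∑ i ∈ range m, x i * (T (i + 1) - T i) =
    ∑ i ∈ range m, T (i + 1) * (x i - x (i + 1)) := by
  have h := abel_sum m x (fun n => -T n) (by simp [h0]) (by simp [hm])
  calc ∑ i ∈ range m, x i * (T (i + 1) - T i)
      = ∑ i ∈ range m, x i * ((fun n => -T n) i - (fun n => -T n) (i + 1)) :=
        Finset.sum_congr rfl fun i _ => by simp only []; ring
    _ = ∑ i ∈ range m, (fun n => -T n) (i + 1) * (x (i + 1) - x i) := h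
    _ = ∑ i ∈ range m, T (i + 1) * (x i - x (i + 1)) :=
        Finset.sum_congr rfl fun i _ => by simp only []; ring

/-! ### Named pieces for the main proof -/

noncomputable def TnF {m : ℕ} (b u₀ : Fin m → ℝ) : ℕ → ℝ :=
  fun n => ∑ j ∈ range n, (extv u₀ j - extv b j)

noncomputable def wF {m : ℕ} (γ₁ : ℝ) (u₀ : Fin m → ℝ) : Fin m → ℝ :=
  fun i => soft γ₁ (u₀ i)

noncomputable def xF {m : ℕ} (γ₁ : ℝ) (u u₀ : Fin m → ℝ) : ℕ → ℝ :=
  fun n => extv u n - soft γ₁ (extv u₀ n)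

lemma extv_wF {m : ℕ} {γ₁ : ℝ} (hγ₁ : 0 ≤ γ₁) (u₀ : Fin m → ℝ) (n : ℕ) :
    extv (wF γ₁ u₀) n = soft γ₁ (extv u₀ n) := by
  unfold extv wF
  by_cases h : n < m
  · rw [dif_pos h, dif_pos h]
  · rw [dif_neg h, dif_neg h, soft_zero_right hγ₁]

end FLSoftAux

open FLSoftAux

/-- Soft-thresholding property of the fused lasso signal approximation: the minimizer
with `ℓ¹` penalty `γ₁` is obtained by componentwise soft-thresholding (at level `γ₁`)
of the minimizer without `ℓ¹` penalty. -/
theorem fused_lasso_soft_thresholding (m : ℕ) (b : Fin m → ℝ)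
    (γ₁ γ₂ : ℝ) (hγ₁ : 0 ≤ γ₁) (hγ₂ : 0 ≤ γ₂)
    (u u₀ : Fin m → ℝ)
    (hu : ∀ v : Fin m → ℝ,
        (1/2) * (∑ i, (b i - u i)^2) + γ₁ * (∑ i, |u i|) + γ₂ * fusedLassoPenalty u ≤
        (1/2) * (∑ i, (b i - v i)^2) + γ₁ * (∑ i, |v i|) + γ₂ * fusedLassoPenalty v)
    (hu₀ : ∀ v : Fin m → ℝ,
        (1/2) * (∑ i, (b i - u₀ i)^2) + γ₂ * fusedLassoPenalty u₀ ≤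
        (1/2) * (∑ i, (b i - v i)^2) + γ₂ * fusedLassoPenalty v) :
    ∀ i : Fin m, u i = Real.sign (u₀ i) * max (|u₀ i| - γ₁) 0 := by
  have hkey := key_perturb m b u₀ γ₂ hu₀
  -- certificates
  have hC1 : ∀ k : ℕ, k + 1 < m →
      |TnF b u₀ (k+1)| ≤ γ₂ ∧
      TnF b u₀ (k+1) * (extv u₀ (k+1) - extv u₀ k) = γ₂ * |extv u₀ (k+1) - extv u₀ k| := by
    intro k hk
    refine cert_abs (by positivity : (0:ℝ) ≤ ((k:ℝ)+1)/2) hγ₂ ?_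
    intro ε
    have h := hkey k (by omega) ε
    rw [if_pos hk] at h
    exact h
  have hC3 : TnF b u₀ m = 0 := by
    rcases Nat.eq_zero_or_pos m with hm | hm
    · subst hm; unfold TnF; simp
    · have hmk : m - 1 < m := by omega
      have hms : m - 1 + 1 = m := by omega
      have H : ∀ ε : ℝ, 0 ≤ ε * TnF b u₀ m + ((↑(m-1):ℝ)+1)/2 * ε^2
          + 0 * (|(0:ℝ) - ε| - |(0:ℝ)|) := by
        intro ε
        have h := hkey (m-1) hmk ε
        rw [if_neg (by omega), hms] at h
        have h2 : TnF b u₀ m = ∑ j ∈ range m, (extv u₀ j - extv b j) := rfl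
        rw [h2]
        nlinarith [h]
      have h0 := (cert_abs (by positivity : (0:ℝ) ≤ ((↑(m-1):ℝ)+1)/2) le_rfl H).1
      exact abs_eq_zero.1 (le_antisymm h0 (abs_nonneg _))
  have hT0 : TnF b u₀ 0 = 0 := by unfold TnF; simp
  -- ℓ¹ part
  have hE2 : 0 ≤ ∑ i : Fin m,
      (γ₁*|u i| - γ₁*|wF γ₁ u₀ i| - γ₁ * sg γ₁ (u₀ i) * (u i - wF γ₁ u₀ i)) := by
    refine Finset.sum_nonneg fun i _ => ?_
    have h1 : sg γ₁ (u₀ i) * wF γ₁ u₀ i = |wF γ₁ u₀ i| := by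
      rw [show wF γ₁ u₀ i = soft γ₁ (u₀ i) from rfl]
      exact sg_mul_soft hγ₁ _
    have h2 : sg γ₁ (u₀ i) * u i ≤ |u i| := by
      calc sg γ₁ (u₀ i) * u i ≤ |sg γ₁ (u₀ i) * u i| := le_abs_self _
        _ = |sg γ₁ (u₀ i)| * |u i| := abs_mul _ _
        _ ≤ 1 * |u i| := mul_le_mul_of_nonneg_right (sg_abs_le hγ₁ _) (abs_nonneg _)
        _ = |u i| := one_mul _
    nlinarith [mul_nonneg hγ₁ (sub_nonneg.2 h2)]
  -- fused-lasso part
  have hE1 : 0 ≤ (∑ i : Fin m, (u i - wF γ₁ u₀ i) * (u₀ i - b i))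
      + γ₂ * fusedLassoPenalty u - γ₂ * fusedLassoPenalty (wF γ₁ u₀) := by
    have ea : ∑ i : Fin m, (u i - wF γ₁ u₀ i) * (u₀ i - b i)
        = ∑ n ∈ range m, xF γ₁ u u₀ n * (TnF b u₀ (n+1) - TnF b u₀ n) := by
      refine Eq.trans ?_
        (Fin.sum_univ_eq_sum_range (fun n => xF γ₁ u u₀ n * (TnF b u₀ (n+1) - TnF b u₀ n)) m)
      refine Finset.sum_congr rfl fun i _ => ?_
      show (u i - wF γ₁ u₀ i) * (u₀ i - b i)
          = xF γ₁ u u₀ (i:ℕ) * (TnF b u₀ ((i:ℕ)+1) - TnF b u₀ (i:ℕ))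
      have h1 : xF γ₁ u u₀ (i:ℕ) = u i - wF γ₁ u₀ i := by
        unfold xF wF
        rw [extv_apply, extv_apply]
      have h2 : TnF b u₀ ((i:ℕ)+1) - TnF b u₀ (i:ℕ) = u₀ i - b i := by
        unfold TnF
        rw [Finset.sum_range_succ, extv_apply, extv_apply]
        ring
      rw [h1, h2]
    rw [ea, abel_sum2 m (xF γ₁ u u₀) (TnF b u₀) hT0 hC3]
    rw [fl_ext u, fl_ext (wF γ₁ u₀)]
    have hflw : ∑ n ∈ range m, (if n + 1 < m then |extv (wF γ₁ u₀) (n + 1) - extv (wF γ₁ u₀) n| else 0)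
        = ∑ n ∈ range m, (if n + 1 < m then |soft γ₁ (extv u₀ (n + 1)) - soft γ₁ (extv u₀ n)| else 0) := by
      refine Finset.sum_congr rfl fun n _ => ?_
      rw [extv_wF hγ₁, extv_wF hγ₁]
    rw [hflw, Finset.mul_sum, Finset.mul_sum, ← Finset.sum_add_distrib, ← Finset.sum_sub_distrib]
    refine Finset.sum_nonneg fun n hn => ?_
    rw [mem_range] at hn
    by_cases h : n + 1 < m
    · rw [if_pos h, if_pos h]
      obtain ⟨habs, hcert⟩ := hC1 n h
      have htrans : TnF b u₀ (n+1) * (soft γ₁ (extv u₀ (n+1)) - soft γ₁ (extv u₀ n))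
          = γ₂ * |soft γ₁ (extv u₀ (n+1)) - soft γ₁ (extv u₀ n)| :=
        transfer hγ₁ hcert
      have hub : TnF b u₀ (n+1) * (extv u (n+1) - extv u n) ≤ γ₂ * |extv u (n+1) - extv u n| := by
        calc TnF b u₀ (n+1) * (extv u (n+1) - extv u n)
            ≤ |TnF b u₀ (n+1) * (extv u (n+1) - extv u n)| := le_abs_self _
          _ = |TnF b u₀ (n+1)| * |extv u (n+1) - extv u n| := abs_mul _ _
          _ ≤ γ₂ * |extv u (n+1) - extv u n| :=
              mul_le_mul_of_nonneg_right habs (abs_nonneg _)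
      have hxe : xF γ₁ u u₀ n - xF γ₁ u u₀ (n+1)
          = (soft γ₁ (extv u₀ (n+1)) - soft γ₁ (extv u₀ n)) - (extv u (n+1) - extv u n) := by
        unfold xF; ring
      rw [hxe]
      nlinarith [htrans, hub]
    · rw [if_neg h, if_neg h]
      have hTz : TnF b u₀ (n+1) = 0 := by
        have he : n + 1 = m := by omega
        rw [he, hC3]
      rw [hTz]
      simp
  -- combine into the main inequality
  have hmain : (1/2) * (∑ i, (b i - wF γ₁ u₀ i)^2) + γ₁ * (∑ i, |wF γ₁ u₀ i|)
      + γ₂ * fusedLassoPenalty (wF γ₁ u₀) + (1/2) * (∑ i, (u i - wF γ₁ u₀ i)^2)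
      ≤ (1/2) * (∑ i, (b i - u i)^2) + γ₁ * (∑ i, |u i|) + γ₂ * fusedLassoPenalty u := by
    have hquad : ∑ i : Fin m, (b i - u i)^2
        = ∑ i : Fin m, ((b i - wF γ₁ u₀ i)^2 + (u i - wF γ₁ u₀ i)^2
            + 2*((u i - wF γ₁ u₀ i)*(wF γ₁ u₀ i - b i))) :=
      Finset.sum_congr rfl fun i _ => by ring
    have hsplit : ∑ i : Fin m, ((b i - wF γ₁ u₀ i)^2 + (u i - wF γ₁ u₀ i)^2
            + 2*((u i - wF γ₁ u₀ i)*(wF γ₁ u₀ i - b i)))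
        = (∑ i, (b i - wF γ₁ u₀ i)^2) + (∑ i, (u i - wF γ₁ u₀ i)^2)
          + 2*(∑ i, (u i - wF γ₁ u₀ i)*(wF γ₁ u₀ i - b i)) := by
      rw [Finset.sum_add_distrib, Finset.sum_add_distrib, Finset.mul_sum]
    have hdecomp : ∑ i : Fin m, (u i - wF γ₁ u₀ i)*(wF γ₁ u₀ i - b i)
        = (∑ i : Fin m, (u i - wF γ₁ u₀ i) * (u₀ i - b i))
          - ∑ i : Fin m, (γ₁ * sg γ₁ (u₀ i)) * (u i - wF γ₁ u₀ i) := by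
      rw [← Finset.sum_sub_distrib]
      refine Finset.sum_congr rfl fun i _ => ?_
      have hsg : γ₁ * sg γ₁ (u₀ i) = u₀ i - wF γ₁ u₀ i := by
        rw [sg_mul hγ₁]; rfl
      rw [hsg]; ring
    have hE2' : 0 ≤ γ₁ * (∑ i, |u i|) - γ₁ * (∑ i, |wF γ₁ u₀ i|)
        - ∑ i : Fin m, (γ₁ * sg γ₁ (u₀ i)) * (u i - wF γ₁ u₀ i) := by
      have he : ∑ i : Fin m, (γ₁*|u i| - γ₁*|wF γ₁ u₀ i| - γ₁ * sg γ₁ (u₀ i) * (u i - wF γ₁ u₀ i))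
          = γ₁ * (∑ i, |u i|) - γ₁ * (∑ i, |wF γ₁ u₀ i|)
            - ∑ i : Fin m, (γ₁ * sg γ₁ (u₀ i)) * (u i - wF γ₁ u₀ i) := by
        rw [Finset.mul_sum, Finset.mul_sum, ← Finset.sum_sub_distrib, ← Finset.sum_sub_distrib]
        try exact Finset.sum_congr rfl fun i _ => by ring
      linarith [he ▸ hE2]
    rw [hquad, hsplit, hdecomp]
    linarith [hE1, hE2']
  have hle := hu (wF γ₁ u₀)
  have hz : ∑ i : Fin m, (u i - wF γ₁ u₀ i)^2 = 0 := by
    have h1 : ∑ i : Fin m, (u i - wF γ₁ u₀ i)^2 ≤ 0 := by linarith [hmain, hle]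
    exact le_antisymm h1 (Finset.sum_nonneg fun i _ => sq_nonneg _)
  intro i
  have hiz : (u i - wF γ₁ u₀ i)^2 = 0 :=
    (Finset.sum_eq_zero_iff_of_nonneg (fun j _ => sq_nonneg _)).1 hz i (mem_univ i)
  have huw : u i = wF γ₁ u₀ i := by
    have h := pow_eq_zero_iff (n := 2) (by norm_num) |>.1 hiz
    linarith [sub_eq_zero.1 h]
  rw [huw, show wF γ₁ u₀ i = soft γ₁ (u₀ i) from rfl]
  exact soft_eq_sign hγ₁
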